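/- For all polynomials v_1, v_2 ∈ ω(K[V_{d−1}]) (polynomials in v_1,…,v_{d−1} with zero constant term), the map π satisfies π(v_1 v_2) = π(v_1)·v_2 + π(v_2)·v_1, where on the right-hand side · denotes the K[U_d,V_d]-module action on F_d'. -/

import Mathlib

noncomputable section

/-- The metabelian relation on the free associative algebra:
products of two commutators are identified with zero. -/
def MetabRel (K : Type*) [CommRing K] (d : ℕ) (p q : FreeAlgebra K (Fin d)) : Prop :=
  q = 0 ∧ ∃ a b c e : FreeAlgebra K (Fin d), p = (a * b - b * a) * (c * e - e * c)

/-- The free metabelian associative algebra `F_d = A_d/(A_d')²`. -/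
abbrev FreeMetab (K : Type*) [CommRing K] (d : ℕ) := RingQuot (MetabRel K d)

/-- The free generators `x_i` of `F_d`. -/
def xg (K : Type*) [CommRing K] (d : ℕ) (i : Fin d) : FreeMetab K d :=
  RingQuot.mkAlgHom K (MetabRel K d) (FreeAlgebra.ι K i)

/-- The commutator ideal `F_d'`: the two-sided ideal generated by all commutators. -/
def commIdeal (K : Type*) [CommRing K] (d : ℕ) : Ideal (FreeMetab K d) :=
  Ideal.span {z | ∃ a f g b : FreeMetab K d, z = a * (f * g - g * f) * b}

/-- `K[U_d,V_d]`. -/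
abbrev PolyUV (K : Type*) [CommRing K] (d : ℕ) := MvPolynomial (Fin d ⊕ Fin d) K

def uP (K : Type*) [CommRing K] (d : ℕ) (i : Fin d) : PolyUV K d := MvPolynomial.X (Sum.inl i)
def vP (K : Type*) [CommRing K] (d : ℕ) (i : Fin d) : PolyUV K d := MvPolynomial.X (Sum.inr i)

/-- Action of a monomial of `K[U_d,V_d]` on `F_d`, implementing
`f·u_i = x_i f` and `f·v_i = [f,x_i]` (on the commutator ideal all the
individual operators commute, so the fixed order of composition is immaterial). -/
def monAct (K : Type*) [CommRing K] (d : ℕ) (m : (Fin d ⊕ Fin d) →₀ ℕ) :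
    Module.End K (FreeMetab K d) :=
  (List.ofFn fun i : Fin d =>
      (LinearMap.mulLeft K (xg K d i) : Module.End K (FreeMetab K d)) ^ m (Sum.inl i)).prod *
  (List.ofFn fun i : Fin d =>
      (LinearMap.mulRight K (xg K d i) - LinearMap.mulLeft K (xg K d i) :
        Module.End K (FreeMetab K d)) ^ m (Sum.inr i)).prod

/-- The action of `K[U_d,V_d]` on the commutator ideal of `F_d`. -/
def act (K : Type*) [CommRing K] (d : ℕ) (p : PolyUV K d) (w : FreeMetab K d) : FreeMetab K d :=
  ∑ m ∈ p.support, p.coeff m • (monAct K d m w)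

/-- The action of a monomial in `u_1,…,u_d,v_1,…,v_d` (the variables corresponding to
`x_1,…,x_d`) on `F_{d+1}`, implementing `f·u_i = x_i f`, `f·v_i = [f,x_i]`. -/
def monActS (K : Type*) [CommRing K] (d : ℕ) (m : (Fin d ⊕ Fin d) →₀ ℕ) :
    Module.End K (FreeMetab K (d + 1)) :=
  (List.ofFn fun i : Fin d =>
      (LinearMap.mulLeft K (xg K (d + 1) i.castSucc) :
        Module.End K (FreeMetab K (d + 1))) ^ m (Sum.inl i)).prod *
  (List.ofFn fun i : Fin d =>
      (LinearMap.mulRight K (xg K (d + 1) i.castSucc)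
          - LinearMap.mulLeft K (xg K (d + 1) i.castSucc) :
        Module.End K (FreeMetab K (d + 1))) ^ m (Sum.inr i)).prod

/-- The action of `K[U_d,V_d] ⊆ K[U_{d+1},V_{d+1}]` on `F_{d+1}`. -/
def actS (K : Type*) [CommRing K] (d : ℕ) (p : PolyUV K d) (w : FreeMetab K (d + 1)) :
    FreeMetab K (d + 1) :=
  ∑ m ∈ p.support, p.coeff m • (monActS K d m w)

/-- The map `π : K[U_d,V_d]_ω → F_{d+1}'`, defined on monomials by
`π(u_{i_1}⋯u_{i_m}v_{j_1}⋯v_{j_n}) = Σ_k [x_{d+1},x_{j_k}]·(v_{j_1}⋯v̂_{j_k}⋯v_{j_n}u_{i_1}⋯u_{i_m})`. -/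
def piMap (K : Type*) [CommRing K] (d : ℕ) (p : PolyUV K d) : FreeMetab K (d + 1) :=
  ∑ m ∈ p.support, p.coeff m •
    ∑ k : Fin d, (m (Sum.inr k)) •
      monActS K d (m - Finsupp.single (Sum.inr k) 1)
        (xg K (d + 1) (Fin.last d) * xg K (d + 1) k.castSucc
          - xg K (d + 1) k.castSucc * xg K (d + 1) (Fin.last d))

/-- `ω(K[V_d])`: the span of the nonconstant monomials in `v_1,…,v_d` only. -/
def omegaV (K : Type*) [CommRing K] (d : ℕ) : Submodule K (PolyUV K d) :=
  Submodule.span K {w : PolyUV K d | ∃ m : (Fin d ⊕ Fin d) →₀ ℕ,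
    m ≠ 0 ∧ (∀ i, m (Sum.inl i) = 0) ∧ w = MvPolynomial.monomial m (1 : K)}

/-! ### Auxiliary material for the proof -/

section SumSupport
variable {σ : Type*} {R : Type*} [CommSemiring R] {N : Type*} [AddCommMonoid N] [Module R N]

theorem MySumSupport.extend (p : MvPolynomial σ R) {s : Finset (σ →₀ ℕ)} (hs : p.support ⊆ s)
    (F : (σ →₀ ℕ) → N) : ∑ m ∈ p.support, p.coeff m • F m = ∑ m ∈ s, p.coeff m • F m :=
  Finset.sum_subset hs (by
    intro m _ hm; rw [MvPolynomial.notMem_support_iff.mp hm, zero_smul])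

theorem MySumSupport.add (p q : MvPolynomial σ R) (F : (σ →₀ ℕ) → N) :
    ∑ m ∈ (p + q).support, (p + q).coeff m • F m
      = ∑ m ∈ p.support, p.coeff m • F m + ∑ m ∈ q.support, q.coeff m • F m := by
  classical
  rw [MySumSupport.extend (p+q) (MvPolynomial.support_add) F,
    MySumSupport.extend p (Finset.subset_union_left) F,
    MySumSupport.extend q (Finset.subset_union_right) F, ← Finset.sum_add_distrib]
  simp only [MvPolynomial.coeff_add, add_smul]

theorem MySumSupport.monomial (m : σ →₀ ℕ) (c : R) (F : (σ →₀ ℕ) → N) :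
    ∑ m' ∈ (MvPolynomial.monomial m c).support,
      (MvPolynomial.monomial m c).coeff m' • F m' = c • F m := by
  classical
  rcases eq_or_ne c 0 with rfl | hc
  · simp
  · rw [MvPolynomial.support_monomial, if_neg hc, Finset.sum_singleton,
      MvPolynomial.coeff_monomial, if_pos rfl]
end SumSupport

section GenericRing
variable {R : Type*} [Ring R]

theorem MyRing.LL {xi xj w : R} (h1 : (xi * xj - xj * xi) * w = 0) :
    xi * (xj * w) = xj * (xi * w) := by
  rw [← sub_eq_zero]
  calc xi * (xj * w) - xj * (xi * w) = (xi * xj - xj * xi) * w := by noncomm_ring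
    _ = 0 := h1

theorem MyRing.LV {xi xj w : R} (h1 : (xj * xi - xi * xj) * w = 0) :
    xi * (w * xj - xj * w) = (xi * w) * xj - xj * (xi * w) := by
  rw [← sub_eq_zero]
  calc xi * (w * xj - xj * w) - ((xi * w) * xj - xj * (xi * w))
      = (xj * xi - xi * xj) * w := by noncomm_ring
    _ = 0 := h1

theorem MyRing.VV {xi xj w : R} (h1 : (xi * xj - xj * xi) * w = 0)
    (h2 : w * (xi * xj - xj * xi) = 0) :
    (w * xj - xj * w) * xi - xi * (w * xj - xj * w)
      = (w * xi - xi * w) * xj - xj * (w * xi - xi * w) := by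
  rw [← sub_eq_zero]
  calc (w * xj - xj * w) * xi - xi * (w * xj - xj * w)
        - ((w * xi - xi * w) * xj - xj * (w * xi - xi * w))
      = (xi * xj - xj * xi) * w - w * (xi * xj - xj * xi) := by noncomm_ring
    _ = 0 := by rw [h1, h2, sub_zero]
end GenericRing

section Lists
variable {M : Type*} [Monoid M]

theorem MyList.prod_comm_of_comm {l1 l2 : List M} (h : ∀ x ∈ l1, ∀ y ∈ l2, Commute x y) :
    Commute l1.prod l2.prod :=
  Commute.list_prod_right _ _ fun y hy => (Commute.list_prod_left _ _ fun x hx => h x hx y hy)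

theorem MyList.ofFn_pow_add {n : ℕ} (f : Fin n → M) (hc : ∀ i j, Commute (f i) (f j))
    (a b : Fin n → ℕ) :
    (List.ofFn fun i => f i ^ (a i + b i)).prod
      = (List.ofFn fun i => f i ^ a i).prod * (List.ofFn fun i => f i ^ b i).prod := by
  induction n with
  | zero => simp
  | succ n ih =>
    rw [List.ofFn_succ, List.ofFn_succ (f := fun i => f i ^ a i),
      List.ofFn_succ (f := fun i => f i ^ b i), List.prod_cons, List.prod_cons, List.prod_cons,
      ih (fun i => f i.succ) (fun i j => hc _ _) (fun i => a i.succ) (fun i => b i.succ)]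
    have hcomm : Commute (f 0 ^ b 0) (List.ofFn fun i => f i.succ ^ a i.succ).prod := by
      apply Commute.list_prod_right
      intro x hx
      obtain ⟨i, rfl⟩ := List.mem_ofFn.mp hx
      exact (hc 0 i.succ).pow_pow _ _
    rw [pow_add, mul_assoc (f 0 ^ a 0), ← mul_assoc (f 0 ^ b 0), hcomm.eq]
    simp [mul_assoc]
end Lists

section Intertwine
variable {K M : Type*} [CommRing K] [AddCommGroup M] [Module K M] {C : Submodule K M}

theorem MyInter.pow {f : Module.End K M} {f' : Module.End K C}
    (h : ∀ w : C, f ↑w = ↑(f' w)) (k : ℕ) (w : C) : (f ^ k) ↑w = ↑((f' ^ k) w) := by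
  induction k generalizing w with
  | zero => simp
  | succ k ih =>
    rw [pow_succ, pow_succ, Module.End.mul_apply, Module.End.mul_apply, h, ih]

theorem MyInter.list {ι : Type*} (g : ι → Module.End K M) (g' : ι → Module.End K C)
    (h : ∀ i (w : C), g i ↑w = ↑(g' i w)) (l : List ι) (w : C) :
    ((l.map g).prod) ↑w = ↑(((l.map g').prod) w) := by
  induction l generalizing w with
  | nil => simp
  | cons a t ih =>
    rw [List.map_cons, List.map_cons, List.prod_cons, List.prod_cons,
      Module.End.mul_apply, Module.End.mul_apply, ih, h]
end Intertwine

section Metab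
variable (K : Type*) [CommRing K] (d : ℕ)

theorem comm_mid (f g x h k : FreeMetab K d) :
    (f * g - g * f) * x * (h * k - k * h) = 0 := by
  obtain ⟨F, rfl⟩ := RingQuot.mkAlgHom_surjective K (MetabRel K d) f
  obtain ⟨G, rfl⟩ := RingQuot.mkAlgHom_surjective K (MetabRel K d) g
  obtain ⟨X, rfl⟩ := RingQuot.mkAlgHom_surjective K (MetabRel K d) x
  obtain ⟨H, rfl⟩ := RingQuot.mkAlgHom_surjective K (MetabRel K d) h
  obtain ⟨Y, rfl⟩ := RingQuot.mkAlgHom_surjective K (MetabRel K d) k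
  have key : (F * G - G * F) * X * (H * Y - Y * H)
      = (F * G - G * F) * (X * (H * Y - Y * H) - (H * Y - Y * H) * X)
        + ((F * G - G * F) * (H * Y - Y * H)) * X := by noncomm_ring
  have h1 : RingQuot.mkAlgHom K (MetabRel K d)
      ((F * G - G * F) * (X * (H * Y - Y * H) - (H * Y - Y * H) * X)) = 0 := by
    have := RingQuot.mkAlgHom_rel K
      (show MetabRel K d ((F * G - G * F) * (X * (H * Y - Y * H) - (H * Y - Y * H) * X)) 0 from
        ⟨rfl, F, G, X, H * Y - Y * H, rfl⟩)
    simpa using this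
  have h2 : RingQuot.mkAlgHom K (MetabRel K d) ((F * G - G * F) * (H * Y - Y * H)) = 0 := by
    have := RingQuot.mkAlgHom_rel K
      (show MetabRel K d ((F * G - G * F) * (H * Y - Y * H)) 0 from ⟨rfl, F, G, H, Y, rfl⟩)
    simpa using this
  calc (RingQuot.mkAlgHom K (MetabRel K d) F * RingQuot.mkAlgHom K (MetabRel K d) G
        - RingQuot.mkAlgHom K (MetabRel K d) G * RingQuot.mkAlgHom K (MetabRel K d) F)
        * RingQuot.mkAlgHom K (MetabRel K d) X
        * (RingQuot.mkAlgHom K (MetabRel K d) H * RingQuot.mkAlgHom K (MetabRel K d) Y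
        - RingQuot.mkAlgHom K (MetabRel K d) Y * RingQuot.mkAlgHom K (MetabRel K d) H)
      = RingQuot.mkAlgHom K (MetabRel K d) ((F * G - G * F) * X * (H * Y - Y * H)) := by
        simp [map_mul, map_sub]
    _ = 0 := by rw [key, map_add, h1, map_mul, h2, zero_mul, add_zero]

theorem commIdeal_mul_eq_zero {A B : FreeMetab K d}
    (hA : A ∈ commIdeal K d) (hB : B ∈ commIdeal K d) : A * B = 0 := by
  have gen : ∀ a f g b : FreeMetab K d, ∀ B ∈ commIdeal K d,
      (a * (f * g - g * f) * b) * B = 0 := by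
    intro a f g b B hB
    induction hB using Submodule.span_induction generalizing b with
    | mem z hz =>
      obtain ⟨c, h, k, e, rfl⟩ := hz
      have : (a * (f * g - g * f) * b) * (c * (h * k - k * h) * e)
          = a * ((f * g - g * f) * (b * c) * (h * k - k * h)) * e := by noncomm_ring
      rw [this, comm_mid, mul_zero, zero_mul]
    | zero => rw [mul_zero]
    | add y z _ _ hy hz => rw [mul_add, hy, hz, add_zero]
    | smul r y _ hy =>
      rw [smul_eq_mul, show (a * (f * g - g * f) * b) * (r * y)
        = (a * (f * g - g * f) * (b * r)) * y by noncomm_ring, hy]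
  induction hA using Submodule.span_induction with
  | mem z hz => obtain ⟨a, f, g, b, rfl⟩ := hz; exact gen a f g b B hB
  | zero => rw [zero_mul]
  | add y z _ _ hy hz => rw [add_mul, hy, hz, add_zero]
  | smul r y _ hy => rw [smul_eq_mul, mul_assoc, hy, mul_zero]

theorem commIdeal_mul_right {x : FreeMetab K d} (r : FreeMetab K d)
    (hx : x ∈ commIdeal K d) : x * r ∈ commIdeal K d := by
  induction hx using Submodule.span_induction with
  | mem z hz =>
    obtain ⟨a, f, g, b, rfl⟩ := hz
    exact Ideal.subset_span ⟨a, f, g, b * r, by noncomm_ring⟩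
  | zero => rw [zero_mul]; exact zero_mem _
  | add y z _ _ hy hz => rw [add_mul]; exact add_mem hy hz
  | smul c y _ hy => rw [smul_eq_mul, mul_assoc]; exact Ideal.mul_mem_left _ _ hy

theorem comm_mem (f g : FreeMetab K d) : f * g - g * f ∈ commIdeal K d :=
  Ideal.subset_span ⟨1, f, g, 1, by noncomm_ring⟩
end Metab

section Ops
variable (K : Type*) [CommRing K] (d : ℕ)

/-- The commutator ideal, viewed as a `K`-submodule. -/
abbrev CC : Submodule K (FreeMetab K (d + 1)) :=
  Submodule.restrictScalars K (commIdeal K (d + 1))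

def Eop (s : Fin d ⊕ Fin d) : Module.End K (FreeMetab K (d + 1)) :=
  Sum.elim
    (fun i => (LinearMap.mulLeft K (xg K (d + 1) i.castSucc) :
        Module.End K (FreeMetab K (d + 1))))
    (fun i => LinearMap.mulRight K (xg K (d + 1) i.castSucc)
        - LinearMap.mulLeft K (xg K (d + 1) i.castSucc)) s

theorem Eop_mem (s : Fin d ⊕ Fin d) : ∀ x ∈ CC K d, Eop K d s x ∈ CC K d := by
  intro x hx
  have hx' : x ∈ commIdeal K (d + 1) := hx
  cases s with
  | inl i =>
    show xg K (d + 1) i.castSucc * x ∈ commIdeal K (d + 1)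
    exact Ideal.mul_mem_left _ _ hx'
  | inr i =>
    show x * xg K (d + 1) i.castSucc - xg K (d + 1) i.castSucc * x ∈ commIdeal K (d + 1)
    exact sub_mem (commIdeal_mul_right K (d + 1) _ hx') (Ideal.mul_mem_left _ _ hx')

def EopC (s : Fin d ⊕ Fin d) : Module.End K ↥(CC K d) :=
  (Eop K d s).restrict (Eop_mem K d s)

theorem EopC_coe (s : Fin d ⊕ Fin d) (w : ↥(CC K d)) :
    (Eop K d s) ↑w = ↑(EopC K d s w) := rfl

theorem EopC_comm (s t : Fin d ⊕ Fin d) : Commute (EopC K d s) (EopC K d t) := by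
  have main : ∀ s t : Fin d ⊕ Fin d, ∀ w : FreeMetab K (d + 1), w ∈ commIdeal K (d + 1) →
      Eop K d s (Eop K d t w) = Eop K d t (Eop K d s w) := by
    intro s t w hw
    cases s with
    | inl i =>
      cases t with
      | inl j =>
        simp only [Eop, Sum.elim_inl, LinearMap.mulLeft_apply]
        exact MyRing.LL (commIdeal_mul_eq_zero K (d + 1) (comm_mem K (d + 1) _ _) hw)
      | inr j =>
        simp only [Eop, Sum.elim_inl, Sum.elim_inr, LinearMap.sub_apply,
          LinearMap.mulRight_apply, LinearMap.mulLeft_apply]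
        exact MyRing.LV (commIdeal_mul_eq_zero K (d + 1) (comm_mem K (d + 1) _ _) hw)
    | inr i =>
      cases t with
      | inl j =>
        simp only [Eop, Sum.elim_inl, Sum.elim_inr, LinearMap.sub_apply,
          LinearMap.mulRight_apply, LinearMap.mulLeft_apply]
        exact (MyRing.LV (commIdeal_mul_eq_zero K (d + 1) (comm_mem K (d + 1) _ _) hw)).symm
      | inr j =>
        simp only [Eop, Sum.elim_inr, LinearMap.sub_apply,
          LinearMap.mulRight_apply, LinearMap.mulLeft_apply]
        exact MyRing.VV (commIdeal_mul_eq_zero K (d + 1) (comm_mem K (d + 1) _ _) hw)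
          (commIdeal_mul_eq_zero K (d + 1) hw (comm_mem K (d + 1) _ _))
  apply LinearMap.ext
  intro w
  apply Subtype.ext
  rw [Module.End.mul_apply, Module.End.mul_apply]
  show ((EopC K d s) ((EopC K d t) w) : FreeMetab K (d + 1))
      = ((EopC K d t) ((EopC K d s) w) : FreeMetab K (d + 1))
  rw [← EopC_coe, ← EopC_coe, ← EopC_coe, ← EopC_coe]
  exact main s t w w.2

def monActC (m : (Fin d ⊕ Fin d) →₀ ℕ) : Module.End K ↥(CC K d) :=
  (List.ofFn fun i : Fin d => EopC K d (Sum.inl i) ^ m (Sum.inl i)).prod *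
  (List.ofFn fun i : Fin d => EopC K d (Sum.inr i) ^ m (Sum.inr i)).prod

theorem monActC_coe (m : (Fin d ⊕ Fin d) →₀ ℕ) (w : ↥(CC K d)) :
    monActS K d m ↑w = ↑(monActC K d m w) := by
  have inter : ∀ (sel : Fin d → Fin d ⊕ Fin d) (w : ↥(CC K d)),
      ((List.ofFn fun i : Fin d => Eop K d (sel i) ^ m (sel i)).prod) ↑w
        = ↑(((List.ofFn fun i : Fin d => EopC K d (sel i) ^ m (sel i)).prod) w) := by
    intro sel w
    rw [List.ofFn_eq_map, List.ofFn_eq_map]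
    exact MyInter.list (fun i => Eop K d (sel i) ^ m (sel i))
      (fun i => EopC K d (sel i) ^ m (sel i))
      (fun i => MyInter.pow (EopC_coe K d (sel i)) (m (sel i))) (List.finRange d) w
  have e0 : monActS K d m ↑w
      = ((List.ofFn fun i : Fin d => Eop K d (Sum.inl i) ^ m (Sum.inl i)).prod)
        (((List.ofFn fun i : Fin d => Eop K d (Sum.inr i) ^ m (Sum.inr i)).prod) ↑w) := rfl
  rw [e0, inter Sum.inr w, inter Sum.inl _]
  rfl

theorem monActC_add (a b : (Fin d ⊕ Fin d) →₀ ℕ) :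
    monActC K d (a + b) = monActC K d a * monActC K d b := by
  have hc : ∀ s t, Commute (EopC K d s) (EopC K d t) := EopC_comm K d
  have hsplit : ∀ sel : Fin d → Fin d ⊕ Fin d,
      (List.ofFn fun i : Fin d => EopC K d (sel i) ^ (a + b) (sel i)).prod
        = (List.ofFn fun i : Fin d => EopC K d (sel i) ^ a (sel i)).prod
          * (List.ofFn fun i : Fin d => EopC K d (sel i) ^ b (sel i)).prod := by
    intro sel
    have h := MyList.ofFn_pow_add (fun i => EopC K d (sel i)) (fun i j => hc _ _)
      (fun i => a (sel i)) (fun i => b (sel i))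
    simpa [Finsupp.add_apply] using h
  have hx : ∀ (sel sel' : Fin d → Fin d ⊕ Fin d) (m m' : (Fin d ⊕ Fin d) →₀ ℕ),
      Commute (List.ofFn fun i : Fin d => EopC K d (sel i) ^ m (sel i)).prod
        (List.ofFn fun i : Fin d => EopC K d (sel' i) ^ m' (sel' i)).prod := by
    intro sel sel' m m'
    apply MyList.prod_comm_of_comm
    intro x hxm y hym
    obtain ⟨i, rfl⟩ := List.mem_ofFn.mp hxm
    obtain ⟨j, rfl⟩ := List.mem_ofFn.mp hym
    exact (hc _ _).pow_pow _ _
  unfold monActC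
  rw [hsplit Sum.inl, hsplit Sum.inr,
    mul_assoc, ← mul_assoc (List.ofFn fun i : Fin d => EopC K d (Sum.inl i) ^ b (Sum.inl i)).prod,
    (hx Sum.inl Sum.inr b a).eq]
  simp [mul_assoc]

theorem monActS_add_apply (a b : (Fin d ⊕ Fin d) →₀ ℕ) (w : FreeMetab K (d + 1))
    (hw : w ∈ commIdeal K (d + 1)) :
    monActS K d (a + b) w = monActS K d a (monActS K d b w) := by
  have hw' : w ∈ CC K d := hw
  rw [show w = ((⟨w, hw'⟩ : ↥(CC K d)) : FreeMetab K (d + 1)) from rfl,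
    monActC_coe, monActC_add, Module.End.mul_apply, ← monActC_coe, ← monActC_coe]
end Ops

section FinsuppShift
theorem finsupp_shift {ι : Type*} [DecidableEq ι] {m : ι →₀ ℕ} (n : ι →₀ ℕ) {k : ι}
    (hk : m k ≠ 0) :
    m + n - Finsupp.single k 1 = n + (m - Finsupp.single k 1) := by
  ext s
  rcases eq_or_ne s k with rfl | hs
  · simp only [Finsupp.tsub_apply, Finsupp.add_apply, Finsupp.single_eq_same]
    omega
  · simp only [Finsupp.tsub_apply, Finsupp.add_apply,
      Finsupp.single_eq_of_ne' (Ne.symm hs)]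
    omega
end FinsuppShift

section Main
variable (K : Type*) [CommRing K] (d : ℕ)

def cPhi (k : Fin d) : FreeMetab K (d + 1) :=
  xg K (d + 1) (Fin.last d) * xg K (d + 1) k.castSucc
    - xg K (d + 1) k.castSucc * xg K (d + 1) (Fin.last d)

theorem cPhi_mem (k : Fin d) : cPhi K d k ∈ commIdeal K (d + 1) := comm_mem K (d + 1) _ _

def PhiS (m : (Fin d ⊕ Fin d) →₀ ℕ) : FreeMetab K (d + 1) :=
  ∑ k : Fin d, (m (Sum.inr k)) •
    monActS K d (m - Finsupp.single (Sum.inr k) 1) (cPhi K d k)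

theorem piMap_eq (p : PolyUV K d) :
    piMap K d p = ∑ m ∈ p.support, p.coeff m • PhiS K d m := rfl

theorem piMap_monomial (m : (Fin d ⊕ Fin d) →₀ ℕ) (c : K) :
    piMap K d (MvPolynomial.monomial m c) = c • PhiS K d m :=
  MySumSupport.monomial m c (PhiS K d)

theorem piMap_add (p q : PolyUV K d) :
    piMap K d (p + q) = piMap K d p + piMap K d q :=
  MySumSupport.add p q (PhiS K d)

theorem actS_monomial (m : (Fin d ⊕ Fin d) →₀ ℕ) (c : K) (w : FreeMetab K (d + 1)) :
    actS K d (MvPolynomial.monomial m c) w = c • monActS K d m w :=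
  MySumSupport.monomial m c (fun m' => monActS K d m' w)

theorem actS_add_left (p q : PolyUV K d) (w : FreeMetab K (d + 1)) :
    actS K d (p + q) w = actS K d p w + actS K d q w :=
  MySumSupport.add p q (fun m' => monActS K d m' w)

theorem actS_add_right (p : PolyUV K d) (w₁ w₂ : FreeMetab K (d + 1)) :
    actS K d p (w₁ + w₂) = actS K d p w₁ + actS K d p w₂ := by
  unfold actS
  rw [← Finset.sum_add_distrib]
  exact Finset.sum_congr rfl fun m _ => by rw [map_add, smul_add]

theorem PhiS_add (m n : (Fin d ⊕ Fin d) →₀ ℕ) :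
    PhiS K d (m + n) = monActS K d n (PhiS K d m) + monActS K d m (PhiS K d n) := by
  unfold PhiS
  rw [map_sum (monActS K d n), map_sum (monActS K d m), ← Finset.sum_add_distrib]
  apply Finset.sum_congr rfl
  intro k _
  rw [map_nsmul, map_nsmul, Finsupp.add_apply, add_smul]
  congr 1
  · rcases eq_or_ne (m (Sum.inr k)) 0 with h0 | h0
    · rw [h0, zero_smul, zero_smul]
    · rw [finsupp_shift n h0, monActS_add_apply K d n _ _ (cPhi_mem K d k)]
  · rcases eq_or_ne (n (Sum.inr k)) 0 with h0 | h0
    · rw [h0, zero_smul, zero_smul]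
    · rw [add_comm m n, finsupp_shift m h0, monActS_add_apply K d m _ _ (cPhi_mem K d k)]

theorem pi_derivation_general (p q : PolyUV K d) :
    piMap K d (p * q) = actS K d q (piMap K d p) + actS K d p (piMap K d q) := by
  induction p using MvPolynomial.induction_on' generalizing q with
  | monomial m a =>
    induction q using MvPolynomial.induction_on' with
    | monomial n b =>
      rw [MvPolynomial.monomial_mul, piMap_monomial, piMap_monomial, piMap_monomial,
        actS_monomial, actS_monomial, map_smul, map_smul, PhiS_add, smul_add,
        smul_smul, smul_smul, mul_comm b a]
    | add q1 q2 hq1 hq2 =>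
      rw [mul_add, piMap_add, hq1, hq2, piMap_add, actS_add_left, actS_add_right]
      abel
  | add p1 p2 hp1 hp2 =>
    rw [add_mul, piMap_add, hp1, hp2, piMap_add, actS_add_left, actS_add_right]
    abel
end Main

/-- For `p, q ∈ ω(K[V_d])` one has `π(pq) = π(p)·q + π(q)·p`. -/
theorem pi_derivation_property
    (K : Type*) [Field K] [CharZero K] (d : ℕ) (hd : 1 ≤ d)
    (p q : PolyUV K d) (hp : p ∈ omegaV K d) (hq : q ∈ omegaV K d) :
    piMap K d (p * q) = actS K d q (piMap K d p) + actS K d p (piMap K d q) := by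
  exact pi_derivation_general K d p q
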